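/- arXiv:2208.09385 — 5 statements merged into one kernel-verified Lean document; each statement's English description precedes it below -/
import Mathlib

section
/- Let ρ be a density matrix on ℂ^d with ρ ≠ I/d, and let E be a linear, trace-preserving, unital, completely positive map on d×d matrices such that E(σ) is positive definite for every density matrix σ. Then tr[E(ρ)²] < tr[ρ²], i.e., the purity strictly decreases. -/
open Matrix ComplexOrder

/-- A density matrix: positive semidefinite with unit trace. -/
def IsDensityMatrix {d : ℕ} (ρ : Matrix (Fin d) (Fin d) ℂ) : Prop :=
  ρ.PosSemidef ∧ ρ.trace = 1

/-- The amplification `id ⊗ E` of a linear map `E` on `d × d` matrices, acting on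
`(k·d) × (k·d)` matrices blockwise. -/
noncomputable def amplify {d k : ℕ}
    (E : Matrix (Fin d) (Fin d) ℂ →ₗ[ℂ] Matrix (Fin d) (Fin d) ℂ)
    (M : Matrix (Fin k × Fin d) (Fin k × Fin d) ℂ) :
    Matrix (Fin k × Fin d) (Fin k × Fin d) ℂ :=
  Matrix.of fun p q => E (Matrix.of fun i j => M (p.1, i) (q.1, j)) p.2 q.2

/-- Complete positivity: every amplification `id_k ⊗ E` preserves positive semidefiniteness. -/
def IsCompletelyPositive {d : ℕ}
    (E : Matrix (Fin d) (Fin d) ℂ →ₗ[ℂ] Matrix (Fin d) (Fin d) ℂ) : Prop :=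
  ∀ (k : ℕ) (M : Matrix (Fin k × Fin d) (Fin k × Fin d) ℂ),
    M.PosSemidef → (amplify E M).PosSemidef

/-- Rank-one spectral pieces of a Hermitian matrix. -/
lemma matrix_decomp {d : ℕ} {A : Matrix (Fin d) (Fin d) ℂ} (hA : A.IsHermitian) :
    ∃ P : Fin d → Matrix (Fin d) (Fin d) ℂ,
      (∀ i, (P i).PosSemidef) ∧ (∀ i, (P i).trace = 1) ∧ ((∑ i, P i) = 1) ∧
      (∀ i j, ((P i) * (P j)).trace = if i = j then 1 else 0) ∧
      (A = ∑ i, (hA.eigenvalues i : ℂ) • P i) ∧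
      (∀ i, ∃ v : Fin d → ℂ, v ≠ 0 ∧ P i = vecMulVec v (star v)) := by
  set U : Matrix (Fin d) (Fin d) ℂ := (hA.eigenvectorUnitary : Matrix (Fin d) (Fin d) ℂ) with hUdef
  have hU1 : star U * U = 1 := hA.eigenvectorUnitary.prop.1
  have hU2 : U * star U = 1 := hA.eigenvectorUnitary.prop.2
  have entry : ∀ i j, (∑ a, (starRingEnd ℂ) (U a i) * U a j) = if i = j then 1 else 0 := by
    intro i j
    have h := congrFun (congrFun hU1 i) j
    simpa [Matrix.mul_apply, Matrix.star_apply, Matrix.one_apply] using h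
  refine ⟨fun i => vecMulVec (fun a => U a i) (star fun a => U a i), ?_, ?_, ?_, ?_, ?_, ?_⟩
  · intro i
    dsimp only
    rw [vecMulVec_eq Unit, ← conjTranspose_replicateCol]
    exact posSemidef_self_mul_conjTranspose _
  · intro i
    have h1 := entry i i
    rw [if_pos rfl] at h1
    dsimp only
    rw [Matrix.trace]
    rw [← h1]
    exact Finset.sum_congr rfl fun a _ => by
      simp [Matrix.diag, vecMulVec_apply, Pi.star_apply, Complex.star_def, mul_comm]
  · ext a b
    have h := congrFun (congrFun hU2 a) b
    simp only [Matrix.mul_apply, Matrix.star_apply] at h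
    simpa [Matrix.sum_apply, vecMulVec_apply, Pi.star_apply] using h
  · intro i j
    have calc1 : ((vecMulVec (fun a => U a i) (star fun a => U a i)) *
        (vecMulVec (fun a => U a j) (star fun a => U a j))).trace
        = (∑ a, (starRingEnd ℂ) (U a i) * U a j) * (∑ a, (starRingEnd ℂ) (U a j) * U a i) := by
      rw [Matrix.trace, Finset.sum_mul_sum]
      rw [Finset.sum_comm]
      refine Finset.sum_congr rfl fun a _ => ?_
      simp only [Matrix.diag, Matrix.mul_apply, vecMulVec_apply, Pi.star_apply]
      refine Finset.sum_congr rfl fun b _ => by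
        simp only [Complex.star_def]; ring
    rw [calc1, entry i j, entry j i]
    by_cases h : i = j
    · simp [h]
    · have h' : ¬ (j = i) := fun hh => h hh.symm
      simp [h, h']
  · ext a b
    conv_lhs => rw [hA.spectral_theorem]
    simp only [Unitary.conjStarAlgAut_apply, Matrix.mul_apply, Matrix.diagonal_apply, Function.comp_apply, Matrix.star_apply,
      mul_ite, ite_mul, mul_zero, zero_mul, Finset.sum_ite_eq, Finset.sum_ite_eq',
      Finset.mem_univ, if_true, Matrix.sum_apply, Matrix.smul_apply, vecMulVec_apply,
      Pi.star_apply, Complex.star_def, smul_eq_mul]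
    refine Finset.sum_congr rfl fun c _ => by rw [mul_right_comm, mul_comm, hUdef]; norm_cast
  · intro i
    refine ⟨fun a => U a i, ?_, rfl⟩
    intro hv
    have h1 := entry i i
    rw [if_pos rfl] at h1
    have h0 : ∀ a, U a i = 0 := fun a => congrFun hv a
    simp [h0] at h1

lemma trace_sum_smul_mul_sum_smul {d : ℕ} (a b : Fin d → ℂ)
    (A B : Fin d → Matrix (Fin d) (Fin d) ℂ) :
    ((∑ i, a i • A i) * (∑ j, b j • B j)).trace
      = ∑ i, ∑ j, a i * b j * (A i * B j).trace := by
  rw [Finset.sum_mul_sum]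
  rw [Matrix.trace_sum]
  refine Finset.sum_congr rfl fun i _ => ?_
  rw [Matrix.trace_sum]
  refine Finset.sum_congr rfl fun j _ => ?_
  rw [smul_mul_assoc, mul_smul_comm, Matrix.trace_smul, Matrix.trace_smul, smul_eq_mul,
    smul_eq_mul, mul_assoc]

lemma trace_mul_vecMulVec {d : ℕ} (M : Matrix (Fin d) (Fin d) ℂ) (v : Fin d → ℂ) :
    (M * vecMulVec v (star v)).trace = star v ⬝ᵥ (M *ᵥ v) := by
  rw [Matrix.trace, dotProduct]
  refine Finset.sum_congr rfl fun i _ => ?_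
  simp only [Matrix.diag, Matrix.mul_apply, vecMulVec_apply, Pi.star_apply, Matrix.mulVec,
    dotProduct, Finset.mul_sum]
  refine Finset.sum_congr rfl fun j _ => by ring

lemma trace_mul_posDef {d : ℕ} (hd : 0 < d) {A B : Matrix (Fin d) (Fin d) ℂ}
    (hA : A.PosDef) (hB : B.PosDef) :
    0 < ((A * B).trace).re ∧ ((A * B).trace).im = 0 := by
  obtain ⟨P, hPsd, hPtr, hPsum, hPorth, hspec, hvec⟩ := matrix_decomp hB.1
  have hmu : ∀ i, 0 < hB.1.eigenvalues i := hB.eigenvalues_pos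
  have key : ∀ i, 0 < ((A * P i).trace).re ∧ ((A * P i).trace).im = 0 := by
    intro i
    obtain ⟨v, hv, hPv⟩ := hvec i
    rw [hPv, trace_mul_vecMulVec]
    have := Complex.lt_def.mp (hA.dotProduct_mulVec_pos hv)
    simpa using ⟨this.1, this.2.symm⟩
  have hAB : (A * B).trace = ∑ i, (hB.1.eigenvalues i : ℂ) * (A * P i).trace := by
    conv_lhs => rw [hspec]
    rw [Finset.mul_sum, Matrix.trace_sum]
    refine Finset.sum_congr rfl fun i _ => ?_
    rw [mul_smul_comm, Matrix.trace_smul, smul_eq_mul]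
  rw [hAB, Complex.re_sum]
  constructor
  · refine Finset.sum_pos (fun i _ => ?_) (Finset.univ_nonempty_iff.mpr ⟨⟨0, hd⟩⟩)
    rw [Complex.re_ofReal_mul]
    exact mul_pos (hmu i) (key i).1
  · rw [Complex.im_sum]
    refine Finset.sum_eq_zero fun i _ => ?_
    rw [Complex.im_ofReal_mul, (key i).2, mul_zero]

lemma doubly_stochastic_strict {d : ℕ} (r : Fin d → Fin d → ℝ) (p : Fin d → ℝ)
    (hpos : ∀ i j, 0 < r i j)
    (hrow : ∀ i, (∑ j, r i j) = 1) (hcol : ∀ j, (∑ i, r i j) = 1)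
    {i0 j0 : Fin d} (hne : p i0 ≠ p j0) :
    (∑ i, ∑ j, p i * p j * r i j) < ∑ i, (p i)^2 := by
  have h1 : (∑ i, ∑ j, r i j * (p i)^2) = ∑ i, (p i)^2 := by
    refine Finset.sum_congr rfl fun i _ => ?_
    rw [← Finset.sum_mul, hrow i, one_mul]
  have h2 : (∑ i, ∑ j, r i j * (p j)^2) = ∑ j, (p j)^2 := by
    rw [Finset.sum_comm]
    refine Finset.sum_congr rfl fun j _ => ?_
    rw [← Finset.sum_mul, hcol j, one_mul]
  have hsplit : (∑ i, ∑ j, r i j * (p i - p j)^2)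
      = (∑ i, ∑ j, r i j * (p i)^2) + (∑ i, ∑ j, r i j * (p j)^2)
        - 2 * (∑ i, ∑ j, p i * p j * r i j) := by
    simp only [Finset.mul_sum, ← Finset.sum_add_distrib, ← Finset.sum_sub_distrib]
    refine Finset.sum_congr rfl fun i _ => Finset.sum_congr rfl fun j _ => by ring
  have hposq : 0 < (∑ i, ∑ j, r i j * (p i - p j)^2) := by
    refine Finset.sum_pos' (fun i _ => Finset.sum_nonneg fun j _ =>
      mul_nonneg (hpos i j).le (sq_nonneg _)) ⟨i0, Finset.mem_univ i0, ?_⟩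
    refine Finset.sum_pos' (fun j _ => mul_nonneg (hpos i0 j).le (sq_nonneg _))
      ⟨j0, Finset.mem_univ j0, ?_⟩
    have : 0 < (p i0 - p j0)^2 := by
      have h := sub_ne_zero.mpr hne
      positivity
    exact mul_pos (hpos i0 j0) this
  rw [hsplit, h1, h2] at hposq
  linarith

theorem purity_strict_decrease' (d : ℕ) (hd : 0 < d)
    (ρ : Matrix (Fin d) (Fin d) ℂ)
    (hρ1 : ρ.PosSemidef) (hρ2 : ρ.trace = 1)
    (hρne : ρ ≠ ((d : ℂ))⁻¹ • (1 : Matrix (Fin d) (Fin d) ℂ))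
    (E : Matrix (Fin d) (Fin d) ℂ →ₗ[ℂ] Matrix (Fin d) (Fin d) ℂ)
    (hTP : ∀ A, (E A).trace = A.trace)
    (hUnital : E 1 = 1)
    (hPD : ∀ σ, σ.PosSemidef → σ.trace = 1 → (E σ).PosDef) :
    ((E ρ * E ρ).trace).re < ((ρ * ρ).trace).re := by
  have hH : ρ.IsHermitian := hρ1.1
  obtain ⟨P, hPsd, hPtr, hPsum, hPorth, hspec, -⟩ := matrix_decomp hH
  set p : Fin d → ℝ := hH.eigenvalues with hp
  have hQpd : ∀ i, (E (P i)).PosDef := fun i => hPD _ (hPsd i) (hPtr i)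
  set c : Fin d → Fin d → ℂ := fun i j => ((E (P i)) * (E (P j))).trace with hc
  have hcpos : ∀ i j, 0 < (c i j).re ∧ (c i j).im = 0 :=
    fun i j => trace_mul_posDef hd (hQpd i) (hQpd j)
  have hEsum : (∑ j, E (P j)) = 1 := by rw [← map_sum, hPsum, hUnital]
  have hEtr : ∀ i, (E (P i)).trace = 1 := fun i => by rw [hTP, hPtr]
  have hrow : ∀ i, (∑ j, c i j) = 1 := by
    intro i
    have h : (∑ j, c i j) = ((E (P i)) * (∑ j, E (P j))).trace := by
      rw [Finset.mul_sum, Matrix.trace_sum]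
    rw [h, hEsum, mul_one, hEtr]
  have hcol : ∀ j, (∑ i, c i j) = 1 := by
    intro j
    have h : (∑ i, c i j) = ((∑ i, E (P i)) * (E (P j))).trace := by
      rw [Finset.sum_mul, Matrix.trace_sum]
    rw [h, hEsum, one_mul, hEtr]
  set r : Fin d → Fin d → ℝ := fun i j => (c i j).re with hr
  have hrrow : ∀ i, (∑ j, r i j) = 1 := by
    intro i
    have h := congrArg Complex.re (hrow i)
    rw [Complex.re_sum] at h
    simpa using h
  have hrcol : ∀ j, (∑ i, r i j) = 1 := by
    intro j
    have h := congrArg Complex.re (hcol j)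
    rw [Complex.re_sum] at h
    simpa using h
  have hEρ : E ρ = ∑ i, (p i : ℂ) • E (P i) := by
    conv_lhs => rw [hspec]
    rw [map_sum]
    exact Finset.sum_congr rfl fun i _ => E.map_smul _ _
  have hlhsre : ((E ρ * E ρ).trace).re = ∑ i, ∑ j, p i * p j * r i j := by
    rw [hEρ, trace_sum_smul_mul_sum_smul, Complex.re_sum]
    refine Finset.sum_congr rfl fun i _ => ?_
    rw [Complex.re_sum]
    refine Finset.sum_congr rfl fun j _ => ?_
    rw [← Complex.ofReal_mul, Complex.re_ofReal_mul]
  have hrhsre : ((ρ * ρ).trace).re = ∑ i, (p i)^2 := by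
    have hrhs : ((ρ * ρ).trace) = ∑ i, ((p i : ℂ))^2 := by
      conv_lhs => rw [hspec]
      rw [trace_sum_smul_mul_sum_smul]
      refine Finset.sum_congr rfl fun i _ => ?_
      have he : ∀ j, (p i : ℂ) * (p j) * ((P i * P j).trace)
          = if i = j then ((p i : ℂ))^2 else 0 := by
        intro j
        rw [hPorth]
        split
        · next h => subst h; rw [mul_one, sq]
        · rw [mul_zero]
      simp_rw [he]
      rw [Finset.sum_ite_eq]
      simp
    rw [hrhs, Complex.re_sum]
    refine Finset.sum_congr rfl fun i _ => by rw [← Complex.ofReal_pow, Complex.ofReal_re]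
  have hexists : ∃ i0 j0 : Fin d, p i0 ≠ p j0 := by
    by_contra hcon
    push_neg at hcon
    apply hρne
    have hall : ∀ i, p i = p ⟨0, hd⟩ := fun i => hcon i _
    have hρeq : ρ = ((p ⟨0, hd⟩ : ℝ) : ℂ) • 1 := by
      calc ρ = ∑ i, (p i : ℂ) • P i := hspec
        _ = ∑ i, ((p ⟨0, hd⟩ : ℝ) : ℂ) • P i :=
            Finset.sum_congr rfl fun i _ => by rw [hall i]
        _ = ((p ⟨0, hd⟩ : ℝ) : ℂ) • ∑ i, P i := by rw [Finset.smul_sum]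
        _ = _ := by rw [hPsum]
    have htr' : (d : ℂ) * ((p ⟨0, hd⟩ : ℝ) : ℂ) = 1 := by
      have h := hρ2
      rw [hρeq, Matrix.trace_smul, Matrix.trace_one, smul_eq_mul] at h
      rw [mul_comm]
      simpa using h
    have hpval : ((p ⟨0, hd⟩ : ℝ) : ℂ) = ((d : ℂ))⁻¹ := eq_inv_of_mul_eq_one_left
      (by rw [mul_comm]; exact htr')
    rw [hρeq, hpval]
  obtain ⟨i0, j0, hne⟩ := hexists
  rw [hlhsre, hrhsre]
  exact doubly_stochastic_strict r p (fun i j => (hcpos i j).1) hrrow hrcol hne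

/-- Strict purity decrease: a unital, trace-preserving, completely positive map whose
outputs on density matrices are positive definite strictly decreases the purity of any
state other than the maximally mixed state. -/
theorem purity_strict_decrease (d : ℕ) (hd : 0 < d)
    (ρ : Matrix (Fin d) (Fin d) ℂ)
    (hρ : IsDensityMatrix ρ)
    (hρne : ρ ≠ ((d : ℂ))⁻¹ • (1 : Matrix (Fin d) (Fin d) ℂ))
    (E : Matrix (Fin d) (Fin d) ℂ →ₗ[ℂ] Matrix (Fin d) (Fin d) ℂ)
    (hTP : ∀ A, (E A).trace = A.trace)
    (hUnital : E 1 = 1)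
    (hCP : IsCompletelyPositive E)
    (hPD : ∀ σ, IsDensityMatrix σ → (E σ).PosDef) :
    ((E ρ * E ρ).trace).re < ((ρ * ρ).trace).re := by
  exact purity_strict_decrease' d hd ρ hρ.1 hρ.2 hρne E hTP hUnital
    (fun σ h1 h2 => hPD σ ⟨h1, h2⟩)
end

section
/- Let ρ = ∑_i p_i |i⟩⟨i| be the spectral decomposition of a density matrix on ℂ^d that is not the maximally mixed state (so there exist i ≠ i' with p_i ≠ p_{i'}), and let E be a completely positive map with E(|i⟩⟨i|) positive definite for all i. Then the 2d×2d block matrix [[E(ρ²), E(ρ)], [E(ρ), E(I)]] is positive definite. -/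
open Matrix ComplexOrder

section aux

variable {d : ℕ} (v : Fin d → (Fin d → ℂ))

lemma proj_mul (h : ∀ i j, dotProduct (star (v i)) (v j) = if i = j then 1 else 0)
    (i j : Fin d) :
    vecMulVec (v i) (star (v i)) * vecMulVec (v j) (star (v j)) =
      if i = j then vecMulVec (v i) (star (v i)) else 0 := by
  have key : ∀ k l, (vecMulVec (v i) (star (v i)) * vecMulVec (v j) (star (v j))) k l
      = (star (v i) ⬝ᵥ v j) * (v i k * star (v j) l) := by
    intro k l
    simp only [mul_apply, vecMulVec_apply, dotProduct, Finset.sum_mul, Pi.star_apply]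
    congr 1; ext m; ring
  by_cases hij : i = j
  · subst hij
    rw [if_pos rfl]
    ext k l
    rw [key, h i i, if_pos rfl, one_mul, vecMulVec_apply]
  · rw [if_neg hij]
    ext k l
    rw [key, h i j, if_neg hij, zero_mul, Matrix.zero_apply]

lemma proj_sum (h : ∀ i j, dotProduct (star (v i)) (v j) = if i = j then 1 else 0) :
    ∑ i, vecMulVec (v i) (star (v i)) = 1 := by
  set A : Matrix (Fin d) (Fin d) ℂ := Matrix.of fun k j => v j k with hA
  have h1 : Aᴴ * A = 1 := by
    ext i j
    simp only [mul_apply, conjTranspose_apply, hA, Matrix.of_apply, Matrix.one_apply]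
    simpa [dotProduct, mul_comm] using h i j
  have h2 : A * Aᴴ = 1 := mul_eq_one_comm.mp h1
  ext k l
  rw [← h2]
  simp [mul_apply, vecMulVec_apply, hA, Matrix.sum_apply, mul_comm]

lemma my_sum_mulVec {n ι : Type*} [Fintype n] [Fintype ι] (A : ι → Matrix n n ℂ)
    (x : n → ℂ) : (∑ i, A i) *ᵥ x = ∑ i, A i *ᵥ x := by
  ext k
  simp only [mulVec, dotProduct, Matrix.sum_apply, Finset.sum_mul, Finset.sum_apply]
  rw [Finset.sum_comm]

lemma my_dot_sum {n ι : Type*} [Fintype n] [Fintype ι] (u : n → ℂ) (f : ι → n → ℂ) :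
    u ⬝ᵥ (∑ i, f i) = ∑ i, u ⬝ᵥ f i := by
  simp only [dotProduct, Finset.sum_apply, Finset.mul_sum]
  rw [Finset.sum_comm]

end aux

/-- If `ρ = ∑ pᵢ |i⟩⟨i|` is the spectral decomposition of a density matrix with two
distinct eigenvalues, and `E` is completely positive with `E(|i⟩⟨i|)` positive definite
for all `i`, then the block matrix `[[E(ρ²), E(ρ)], [E(ρ), E(I)]]` is positive definite. -/
theorem block_matrix_posDef (d : ℕ)
    (p : Fin d → ℝ) (v : Fin d → (Fin d → ℂ))
    (hp_nonneg : ∀ i, 0 ≤ p i)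
    (hp_sum : ∑ i, p i = 1)
    (h_orthonormal : ∀ i j, dotProduct (star (v i)) (v j) = if i = j then 1 else 0)
    (hp_distinct : ∃ i i', i ≠ i' ∧ p i ≠ p i')
    (ρ : Matrix (Fin d) (Fin d) ℂ)
    (hρ : ρ = ∑ i, (p i : ℂ) • vecMulVec (v i) (star (v i)))
    (E : Matrix (Fin d) (Fin d) ℂ →ₗ[ℂ] Matrix (Fin d) (Fin d) ℂ)
    (hCP : IsCompletelyPositive E)
    (hPD : ∀ i, (E (vecMulVec (v i) (star (v i)))).PosDef) :
    (Matrix.fromBlocks (E (ρ * ρ)) (E ρ) (E ρ) (E 1)).PosDef := by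
  set P : Fin d → Matrix (Fin d) (Fin d) ℂ := fun i => vecMulVec (v i) (star (v i)) with hP
  set B : Fin d → Matrix (Fin d) (Fin d) ℂ := fun i => E (P i) with hB
  set M : Fin d → Matrix (Fin d ⊕ Fin d) (Fin d ⊕ Fin d) ℂ := fun i =>
    Matrix.fromBlocks (((p i : ℂ)^2) • B i) ((p i : ℂ) • B i) ((p i : ℂ) • B i) (B i) with hM
  have hρ2 : ρ * ρ = ∑ i, ((p i : ℂ)^2) • P i := by
    rw [hρ, Finset.sum_mul_sum]
    have step : ∀ i j, ((p i : ℂ) • P i) * ((p j : ℂ) • P j)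
        = if i = j then ((p i : ℂ)^2) • P i else 0 := by
      intro i j
      rw [smul_mul_assoc, mul_smul_comm, proj_mul v h_orthonormal i j, smul_smul]
      by_cases hij : i = j
      · subst hij; simp [pow_two, hP]
      · simp [hij]
    calc (∑ i, ∑ j, ((p i : ℂ) • P i) * ((p j : ℂ) • P j))
        = ∑ i, ∑ j, (if i = j then ((p i : ℂ)^2) • P i else 0) := by
          exact Finset.sum_congr rfl fun i _ => Finset.sum_congr rfl fun j _ => step i j
      _ = ∑ i, ((p i : ℂ)^2) • P i := by
          exact Finset.sum_congr rfl fun i _ => by simp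
  have hone : (1 : Matrix (Fin d) (Fin d) ℂ) = ∑ i, P i := (proj_sum v h_orthonormal).symm
  have hEρ2 : E (ρ * ρ) = ∑ i, ((p i : ℂ)^2) • B i := by
    rw [hρ2, map_sum]; simp [hB]
  have hEρ : E ρ = ∑ i, (p i : ℂ) • B i := by
    rw [hρ, map_sum]; simp [hB, hP]
  have hE1 : E 1 = ∑ i, B i := by rw [hone, map_sum]
  have hblocks : Matrix.fromBlocks (E (ρ * ρ)) (E ρ) (E ρ) (E 1) = ∑ i, M i := by
    rw [hEρ2, hEρ, hE1]
    ext k l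
    rcases k with k | k <;> rcases l with l | l <;>
      simp [hM, Matrix.sum_apply, Matrix.fromBlocks]
  have hBH : ∀ i, (B i).IsHermitian := fun i => (hPD i).1
  have hstarp : ∀ i, star ((p i : ℂ)) = (p i : ℂ) := fun i => Complex.conj_ofReal _
  have hMH : ∀ i, (M i).IsHermitian := by
    intro i
    apply Matrix.IsHermitian.fromBlocks
    · show (((p i : ℂ)^2) • B i)ᴴ = _
      rw [conjTranspose_smul, (hBH i).eq, star_pow, hstarp]
    · rw [conjTranspose_smul, (hBH i).eq, hstarp]
    · exact hBH i
  rw [hblocks]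
  refine posDef_iff_dotProduct_mulVec.mpr ⟨?_, ?_⟩
  · show (∑ i, M i)ᴴ = ∑ i, M i
    rw [conjTranspose_sum]
    exact Finset.sum_congr rfl fun i _ => (hMH i).eq
  · intro x hx
    set a : Fin d → ℂ := x ∘ Sum.inl with ha
    set b : Fin d → ℂ := x ∘ Sum.inr with hb
    set w : Fin d → (Fin d → ℂ) := fun i => (p i : ℂ) • a + b with hw
    have hxe : x = Sum.elim a b := by funext k; cases k <;> rfl
    have hterm : ∀ i, star x ⬝ᵥ (M i *ᵥ x) = star (w i) ⬝ᵥ (B i *ᵥ (w i)) := by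
      intro i
      have hsx : star x = Sum.elim (star a) (star b) := by funext k; cases k <;> rfl
      rw [hM]
      show star x ⬝ᵥ _ = _
      rw [fromBlocks_mulVec, hsx, sumElim_dotProduct_sumElim, ← ha, ← hb]
      have hstarw : star (w i) = (p i : ℂ) • star a + star b := by
        funext k
        simp [hw, star_add, star_smul, hstarp i]
      rw [hw, hstarw]
      simp only [Sum.elim_comp_inl, Sum.elim_comp_inr, Matrix.mulVec_add,
        Matrix.smul_mulVec, Matrix.mulVec_smul, dotProduct_add, add_dotProduct,
        smul_dotProduct, dotProduct_smul, smul_eq_mul, pow_two]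
      ring
    have hform : star x ⬝ᵥ ((∑ i, M i) *ᵥ x) = ∑ i, star (w i) ⬝ᵥ (B i *ᵥ (w i)) := by
      rw [my_sum_mulVec, my_dot_sum]
      exact Finset.sum_congr rfl fun i _ => hterm i
    rw [hform]
    have hnonneg : ∀ i, 0 ≤ star (w i) ⬝ᵥ (B i *ᵥ (w i)) := fun i =>
      (hPD i).posSemidef.dotProduct_mulVec_nonneg (w i)
    obtain ⟨i, i', hii', hpp⟩ := hp_distinct
    have hwne : w i ≠ 0 ∨ w i' ≠ 0 := by
      by_contra hcon
      push_neg at hcon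
      obtain ⟨h1, h2⟩ := hcon
      have ha0 : a = 0 := by
        funext k
        have e1 := congrFun h1 k
        have e2 := congrFun h2 k
        simp only [hw, Pi.add_apply, Pi.smul_apply, Pi.zero_apply, smul_eq_mul] at e1 e2
        have hsub : ((p i : ℂ) - (p i' : ℂ)) * a k = 0 := by linear_combination e1 - e2
        have hane : ((p i : ℂ) - (p i' : ℂ)) ≠ 0 := by
          simp only [ne_eq, sub_eq_zero]
          exact_mod_cast hpp
        exact (mul_eq_zero.mp hsub).resolve_left hane
      have hb0 : b = 0 := by
        have := h1
        rw [hw] at this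
        simp only [ha0, smul_zero, zero_add] at this
        exact this
      apply hx
      rw [hxe, ha0, hb0]
      funext k; cases k <;> rfl
    have hex : ∃ j, 0 < star (w j) ⬝ᵥ (B j *ᵥ (w j)) := by
      rcases hwne with h | h
      · exact ⟨i, (hPD i).dotProduct_mulVec_pos h⟩
      · exact ⟨i', (hPD i').dotProduct_mulVec_pos h⟩
    obtain ⟨j, hj⟩ := hex
    exact Finset.sum_pos' (fun k _ => hnonneg k) ⟨j, Finset.mem_univ j, hj⟩
end

section
/- Let E be a linear, trace-preserving, unital, completely positive map on d×d matrices (d = 2^n) with E(σ) positive definite for all density matrices σ, and let A be the (d²-1)-dimensional real matrix defined by A_{ij} = (1/d) tr[P_i E(P_j)] where {P_i} are the non-identity Pauli strings. Then ‖A θ‖ < ‖θ‖ for every nonzero θ ∈ ℝ^{d²-1}; in particular the operator norm of A is strictly less than 1. -/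
open Matrix ComplexOrder

namespace PTMAux

open Polynomial

variable {d : ℕ} (E : Matrix (Fin d) (Fin d) ℂ →ₗ[ℂ] Matrix (Fin d) (Fin d) ℂ)

lemma E_psd (hCP : IsCompletelyPositive E) {X : Matrix (Fin d) (Fin d) ℂ}
    (hX : X.PosSemidef) : (E X).PosSemidef := by
  have hM : (X.submatrix (Prod.snd : Fin 1 × Fin d → Fin d) Prod.snd).PosSemidef :=
    hX.submatrix _
  have hamp := hCP 1 _ hM
  have key : E X = (amplify E (X.submatrix Prod.snd Prod.snd)).submatrix
      (fun a : Fin d => ((0 : Fin 1), a)) (fun a : Fin d => ((0 : Fin 1), a)) := by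
    ext a b
    show E X a b = E (Matrix.of fun i j => X i j) a b
    rfl
  rw [key]
  exact hamp.submatrix _

lemma E_herm (hCP : IsCompletelyPositive E) {X : Matrix (Fin d) (Fin d) ℂ}
    (hX : X.IsHermitian) : (E X).IsHermitian := by
  classical
  set U : Matrix (Fin d) (Fin d) ℂ := (hX.eigenvectorUnitary : Matrix (Fin d) (Fin d) ℂ)
  have hXp : (U * Matrix.diagonal (fun i => ((max (hX.eigenvalues i) 0 : ℝ) : ℂ)) * Uᴴ).PosSemidef := by
    refine Matrix.PosSemidef.mul_mul_conjTranspose_same ?_ U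
    refine Matrix.posSemidef_diagonal_iff.mpr fun i => ?_
    rw [Complex.zero_le_real]
    exact le_max_right _ _
  have hXm : (U * Matrix.diagonal (fun i => ((max (-hX.eigenvalues i) 0 : ℝ) : ℂ)) * Uᴴ).PosSemidef := by
    refine Matrix.PosSemidef.mul_mul_conjTranspose_same ?_ U
    refine Matrix.posSemidef_diagonal_iff.mpr fun i => ?_
    rw [Complex.zero_le_real]
    exact le_max_right _ _
  have hdec : X = U * Matrix.diagonal (fun i => ((max (hX.eigenvalues i) 0 : ℝ) : ℂ)) * Uᴴ
      - U * Matrix.diagonal (fun i => ((max (-hX.eigenvalues i) 0 : ℝ) : ℂ)) * Uᴴ := by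
    have h := hX.spectral_theorem
    have hfun : (fun i => ((max (hX.eigenvalues i) 0 : ℝ) : ℂ) - ((max (-hX.eigenvalues i) 0 : ℝ) : ℂ))
        = fun i => (RCLike.ofReal ∘ hX.eigenvalues) i := by
      funext i
      rw [Function.comp_apply, ← Complex.ofReal_sub]
      have : (max (hX.eigenvalues i) 0) - (max (-hX.eigenvalues i) 0) = hX.eigenvalues i := by
        rcases le_total (hX.eigenvalues i) 0 with h' | h'
        · rw [max_eq_right h', max_eq_left (by linarith)]; ring
        · rw [max_eq_left h', max_eq_right (by linarith)]; ring
      rw [this]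
      rfl
    rw [← star_eq_conjTranspose, ← Matrix.sub_mul, ← Matrix.mul_sub, Matrix.diagonal_sub]
    show X = U * Matrix.diagonal (fun i => ((max (hX.eigenvalues i) 0 : ℝ) : ℂ) - ((max (-hX.eigenvalues i) 0 : ℝ) : ℂ)) * star U
    rw [hfun]
    exact h
  have := ((E_psd E hCP hXp).isHermitian).sub ((E_psd E hCP hXm).isHermitian)
  rwa [← map_sub, ← hdec] at this

lemma herm_dot {M : Matrix (Fin d) (Fin d) ℂ} (hM : M.IsHermitian) (v y : Fin d → ℂ) :
    star (M *ᵥ v) ⬝ᵥ y = star v ⬝ᵥ (M *ᵥ y) := by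
  rw [star_mulVec, hM.eq, ← dotProduct_mulVec]

lemma conj_dot (M : Matrix (Fin d) (Fin d) ℂ) (v u : Fin d → ℂ) :
    star (star v ⬝ᵥ (M *ᵥ u)) = star u ⬝ᵥ (Mᴴ *ᵥ v) := by
  simp only [dotProduct, mulVec, Matrix.conjTranspose_apply, Finset.mul_sum, star_sum, star_mul',
    star_star, Pi.star_apply]
  rw [Finset.sum_comm]
  refine Finset.sum_congr rfl fun i _ => Finset.sum_congr rfl fun j _ => by ring

lemma dot_single (M : Matrix (Fin d) (Fin d) ℂ) (a b : Fin d) :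
    star (Pi.single a 1) ⬝ᵥ (M *ᵥ Pi.single b 1) = M a b := by
  simp [dotProduct, mulVec, Pi.single_apply, Finset.mul_sum]

lemma quad (hCP : IsCompletelyPositive E) (F : Fin 3 → Matrix (Fin d) (Fin d) ℂ)
    (w : Fin 3 → Fin d → ℂ) :
    0 ≤ ∑ j : Fin 3, ∑ k : Fin 3, star (w j) ⬝ᵥ ((E ((F j)ᴴ * F k)) *ᵥ (w k)) := by
  classical
  set C : Matrix (Fin 1 × Fin d) (Fin 3 × Fin d) ℂ := Matrix.of fun p q => F q.1 p.2 q.2 with hC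
  have hamp := hCP 3 _ (posSemidef_conjTranspose_mul_self C)
  have key : amplify E (Cᴴ * C) = Matrix.of fun p q => E ((F p.1)ᴴ * F q.1) p.2 q.2 := by
    ext ⟨j, a⟩ ⟨k, b⟩
    show E (Matrix.of fun i j' => (Cᴴ * C) (j, i) (k, j')) a b = E ((F j)ᴴ * F k) a b
    have : (Matrix.of fun i j' => (Cᴴ * C) (j, i) (k, j')) = (F j)ᴴ * F k := by
      ext i j'
      simp only [Matrix.of_apply, Matrix.mul_apply, Matrix.conjTranspose_apply, hC,
        Fintype.sum_prod_type, Matrix.of_apply]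
      rw [Fin.sum_univ_one]
    rw [this]
  have h := hamp.dotProduct_mulVec_nonneg (fun q => w q.1 q.2)
  rw [key] at h
  refine le_of_le_of_eq h ?_
  simp only [dotProduct, Matrix.mulVec, Matrix.of_apply, Fintype.sum_prod_type,
    Pi.star_apply, dotProduct]
  simp_rw [Finset.mul_sum]
  exact Finset.sum_congr rfl fun x _ => Finset.sum_comm

lemma schwarz (hUnital : E 1 = 1) (hCP : IsCompletelyPositive E)
    (A B : Matrix (Fin d) (Fin d) ℂ) (hA : A.IsHermitian) (hB : B.IsHermitian)
    (hEA : (E A).IsHermitian) (hEB : (E B).IsHermitian) (v u : Fin d → ℂ) :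
    0 ≤ (star v ⬝ᵥ ((E (A * A)) *ᵥ v) + star v ⬝ᵥ ((E (A * B)) *ᵥ u)
        + star u ⬝ᵥ ((E (B * A)) *ᵥ v) + star u ⬝ᵥ ((E (B * B)) *ᵥ u))
        - star ((E A *ᵥ v) + (E B *ᵥ u)) ⬝ᵥ ((E A *ᵥ v) + (E B *ᵥ u)) := by
  set S : Fin d → ℂ := (E A *ᵥ v) + (E B *ᵥ u) with hS
  have h := quad E hCP ![A, B, 1] ![v, u, -S]
  simp only [Fin.sum_univ_three, Matrix.cons_val_zero, Matrix.cons_val_one, Matrix.head_cons,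
    Matrix.cons_val_two, Matrix.tail_cons, Matrix.conjTranspose_one, hA.eq, hB.eq,
    mul_one, one_mul, hUnital, Matrix.mulVec_neg, dotProduct_neg, star_neg,
    neg_dotProduct, Matrix.one_mulVec, neg_neg] at h
  have e1 : star v ⬝ᵥ (E A *ᵥ S) + star u ⬝ᵥ (E B *ᵥ S) = star S ⬝ᵥ S := by
    rw [← herm_dot hEA, ← herm_dot hEB, hS, star_add, add_dotProduct]
  have e2 : star S ⬝ᵥ (E A *ᵥ v) + star S ⬝ᵥ (E B *ᵥ u) = star S ⬝ᵥ S := by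
    rw [hS, dotProduct_add]
  refine h.trans_eq ?_
  linear_combination -e1 - e2

lemma Gpsd (hUnital : E 1 = 1) (hCP : IsCompletelyPositive E)
    {A : Matrix (Fin d) (Fin d) ℂ} (hA : A.IsHermitian) (hEA : (E A).IsHermitian)
    (hEAA : (E (A * A)).IsHermitian) :
    (E (A * A) - E A * E A).PosSemidef := by
  refine Matrix.PosSemidef.of_dotProduct_mulVec_nonneg ?_ ?_
  · exact hEAA.sub (by rw [Matrix.IsHermitian, conjTranspose_mul, hEA.eq])
  · intro x
    have h := schwarz E hUnital hCP A 0 hA isHermitian_zero hEA (by simp) x 0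
    simp only [mul_zero, zero_mul, map_zero, Matrix.zero_mulVec, Matrix.mulVec_zero,
      dotProduct_zero, zero_dotProduct, add_zero, LinearMap.map_zero] at h
    have e : star (E A *ᵥ x) ⬝ᵥ (E A *ᵥ x) = star x ⬝ᵥ ((E A * E A) *ᵥ x) := by
      rw [herm_dot hEA, mulVec_mulVec]
    rw [e] at h
    rw [Matrix.sub_mulVec, dotProduct_sub]
    exact h

lemma mult (hUnital : E 1 = 1) (hCP : IsCompletelyPositive E)
    {A B : Matrix (Fin d) (Fin d) ℂ} (hA : A.IsHermitian) (hB : B.IsHermitian)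
    (hEA : (E A).IsHermitian) (hEB : (E B).IsHermitian) (hEAB : (E (A * B)).IsHermitian)
    (hcomm : A * B = B * A) (hG : E (A * A) = E A * E A) :
    E (A * B) = E A * E B := by
  set K : Matrix (Fin d) (Fin d) ℂ := E (A * B) - E A * E B with hK
  have hKH : Kᴴ = E (B * A) - E B * E A := by
    rw [hK, conjTranspose_sub, hEAB.eq, conjTranspose_mul, hEA.eq, hEB.eq, hcomm]
  have main : ∀ v u : Fin d → ℂ, star v ⬝ᵥ (K *ᵥ u) = 0 := by
    intro v u
    set z : ℂ := star v ⬝ᵥ (K *ᵥ u) with hz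
    set c : ℂ := star u ⬝ᵥ ((E (B * B) - E B * E B) *ᵥ u) with hc
    have key : ∀ t : ℂ, 0 ≤ star t * z + t * star z + c := by
      intro t
      have h := schwarz E hUnital hCP A B hA hB hEA hEB (t • v) u
      have g1 : star (t • v) ⬝ᵥ (E (A * A) *ᵥ (t • v))
          = star t * t * (star (E A *ᵥ v) ⬝ᵥ (E A *ᵥ v)) := by
        rw [hG, star_smul, smul_dotProduct, mulVec_smul, dotProduct_smul,
          herm_dot hEA, mulVec_mulVec]
        simp only [smul_eq_mul]
        ring
      have g2 : star (t • v) ⬝ᵥ (E (A * B) *ᵥ u)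
          = star t * (star v ⬝ᵥ (E (A * B) *ᵥ u)) := by
        rw [star_smul, smul_dotProduct, smul_eq_mul]
      have g3 : star u ⬝ᵥ (E (B * A) *ᵥ (t • v)) = t * (star u ⬝ᵥ (E (B * A) *ᵥ v)) := by
        rw [mulVec_smul, dotProduct_smul, smul_eq_mul]
      have g4 : star v ⬝ᵥ (E (A * B) *ᵥ u) = z + star v ⬝ᵥ ((E A * E B) *ᵥ u) := by
        rw [hz, hK, Matrix.sub_mulVec, dotProduct_sub]; ring
      have g5 : star u ⬝ᵥ (E (B * A) *ᵥ v) = star z + star u ⬝ᵥ ((E B * E A) *ᵥ v) := by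
        have := conj_dot K v u
        rw [hKH] at this
        rw [hz, this, Matrix.sub_mulVec, dotProduct_sub]
        ring
      have g6 : star u ⬝ᵥ (E (B * B) *ᵥ u) = c + star (E B *ᵥ u) ⬝ᵥ (E B *ᵥ u) := by
        rw [hc, Matrix.sub_mulVec, dotProduct_sub, herm_dot hEB, mulVec_mulVec]; ring
      have g7 : star v ⬝ᵥ ((E A * E B) *ᵥ u) = star (E A *ᵥ v) ⬝ᵥ (E B *ᵥ u) := by
        rw [herm_dot hEA, mulVec_mulVec]
      have g8 : star u ⬝ᵥ ((E B * E A) *ᵥ v) = star (E B *ᵥ u) ⬝ᵥ (E A *ᵥ v) := by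
        rw [herm_dot hEB, mulVec_mulVec]
      have g9 : star (E A *ᵥ (t • v) + E B *ᵥ u) ⬝ᵥ (E A *ᵥ (t • v) + E B *ᵥ u)
          = star t * t * (star (E A *ᵥ v) ⬝ᵥ (E A *ᵥ v))
            + star t * (star (E A *ᵥ v) ⬝ᵥ (E B *ᵥ u))
            + t * (star (E B *ᵥ u) ⬝ᵥ (E A *ᵥ v))
            + star (E B *ᵥ u) ⬝ᵥ (E B *ᵥ u) := by
        rw [mulVec_smul, star_add, star_smul, add_dotProduct, dotProduct_add, dotProduct_add]
        simp only [smul_dotProduct, dotProduct_smul, smul_eq_mul]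
        ring
      refine h.trans_eq ?_
      rw [g1, g2, g3, g4, g5, g6, g9, g7, g8]
      ring
    by_contra hne
    have hpos : 0 < Complex.normSq z := Complex.normSq_pos.mpr hne
    set γ : ℝ := Complex.normSq z with hγ
    set s : ℝ := (c.re + 1) / (2 * γ) with hs
    have h2 := key (-(s : ℂ) * z)
    have hz1 : star z * z = (γ : ℂ) := by
      rw [Complex.star_def, mul_comm, Complex.mul_conj, hγ]
    have hz2 : z * star z = (γ : ℂ) := by rw [Complex.star_def, Complex.mul_conj, hγ]
    have hstar : star (-(s : ℂ) * z) = -(s : ℂ) * star z := by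
      rw [star_mul', star_neg, Complex.star_def, Complex.conj_ofReal, mul_comm]
    have hval : star (-(s : ℂ) * z) * z + (-(s : ℂ) * z) * star z + c
        = -(((2 * s * γ : ℝ)) : ℂ) + c := by
      rw [hstar]
      push_cast
      linear_combination (-(s : ℂ)) * hz1 - (s : ℂ) * hz2
    rw [hval, Complex.le_def] at h2
    obtain ⟨hre, -⟩ := h2
    simp only [Complex.add_re, Complex.neg_re, Complex.ofReal_re, Complex.zero_re] at hre
    have h2sγ : 2 * s * γ = c.re + 1 := by
      rw [hs]
      field_simp
    rw [h2sγ] at hre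
    linarith
  ext a b
  have := main (Pi.single a 1) (Pi.single b 1)
  rw [dot_single] at this
  rw [hK, Matrix.sub_apply, sub_eq_zero] at this
  exact this

/-- Conjugation by a unitary as an algebra homomorphism. -/
noncomputable def conjAH (U : Matrix (Fin d) (Fin d) ℂ) (h1 : U * Uᴴ = 1) (h2 : Uᴴ * U = 1) :
    Matrix (Fin d) (Fin d) ℂ →ₐ[ℂ] Matrix (Fin d) (Fin d) ℂ where
  toFun X := U * X * Uᴴ
  map_one' := by show U * 1 * Uᴴ = 1; rw [Matrix.mul_one, h1]
  map_mul' X Y := by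
    show U * (X * Y) * Uᴴ = U * X * Uᴴ * (U * Y * Uᴴ)
    conv_rhs => rw [Matrix.mul_assoc (U * X) Uᴴ (U * Y * Uᴴ), ← Matrix.mul_assoc Uᴴ (U * Y) Uᴴ,
      ← Matrix.mul_assoc Uᴴ U Y, h2, Matrix.one_mul, ← Matrix.mul_assoc]
    rw [← Matrix.mul_assoc U X Y]
  map_zero' := by show U * 0 * Uᴴ = 0; rw [Matrix.mul_zero, Matrix.zero_mul]
  map_add' X Y := by show U * (X + Y) * Uᴴ = _; rw [Matrix.mul_add, Matrix.add_mul]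
  commutes' c := by
    show U * algebraMap ℂ _ c * Uᴴ = algebraMap ℂ _ c
    simp only [Algebra.algebraMap_eq_smul_one]
    rw [Matrix.mul_smul, Matrix.smul_mul, Matrix.mul_one, h1]

lemma aeval_conj (U : Matrix (Fin d) (Fin d) ℂ) (h1 : U * Uᴴ = 1) (h2 : Uᴴ * U = 1)
    (f : Fin d → ℂ) (p : ℂ[X]) :
    aeval (U * Matrix.diagonal f * Uᴴ) p = U * Matrix.diagonal (fun i => aeval (f i) p) * Uᴴ := by
  have e1 : U * Matrix.diagonal f * Uᴴ = conjAH U h1 h2 (Matrix.diagonalAlgHom ℂ f) := rfl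
  rw [e1, aeval_algHom_apply, aeval_algHom_apply]
  show U * Matrix.diagonal (aeval f p) * Uᴴ = _
  have hfn : (aeval f p : Fin d → ℂ) = fun i => aeval (f i) p := funext fun i => aeval_fn_apply p f i
  rw [hfn]

lemma trace_ctms (R : Matrix (Fin d) (Fin d) ℂ) :
    (Rᴴ * R).trace = ((∑ i, ∑ j, Complex.normSq (R i j) : ℝ) : ℂ) := by
  push_cast
  rw [Matrix.trace]
  simp only [Matrix.diag_apply, Matrix.mul_apply, Matrix.conjTranspose_apply]
  rw [Finset.sum_comm]
  exact Finset.sum_congr rfl fun i _ => Finset.sum_congr rfl fun j _ =>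
    (Complex.normSq_eq_conj_mul_self (z := R i j)).symm ▸ rfl

lemma psd_trace (G : Matrix (Fin d) (Fin d) ℂ) (hG : G.PosSemidef) :
    ∃ r : ℝ, 0 ≤ r ∧ G.trace = (r : ℂ) := by
  have h := hG.trace_nonneg
  refine ⟨G.trace.re, by simpa using (Complex.le_def.mp h).1, ?_⟩
  exact Complex.ext (by simp) (by simpa using ((Complex.le_def.mp h).2).symm)

lemma psd_trace_zero (G : Matrix (Fin d) (Fin d) ℂ) (hG : G.PosSemidef) (h : G.trace = 0) :
    G = 0 := by
  exact hG.trace_eq_zero_iff.mp h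

lemma E_poly (hUnital : E 1 = 1) {Θ : Matrix (Fin d) (Fin d) ℂ}
    (hpow : ∀ k : ℕ, E (Θ ^ k) = (E Θ) ^ k) (p : ℂ[X]) :
    E (aeval Θ p) = aeval (E Θ) p := by
  induction p using Polynomial.induction_on' with
  | add p q hp hq => rw [map_add, map_add, map_add, hp, hq]
  | monomial k c =>
    rw [aeval_monomial, aeval_monomial, ← Algebra.smul_def, ← Algebra.smul_def,
      _root_.map_smul, hpow]

lemma trace_conj (U : Matrix (Fin d) (Fin d) ℂ) (h2 : Uᴴ * U = 1) (f : Fin d → ℂ) :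
    (U * Matrix.diagonal f * Uᴴ).trace = ∑ i, f i := by
  rw [Matrix.trace_mul_cycle, h2, Matrix.one_mul, Matrix.trace_diagonal]

lemma conj_eq_zero (V : Matrix (Fin d) (Fin d) ℂ) (h2 : Vᴴ * V = 1)
    (D : Matrix (Fin d) (Fin d) ℂ) (h : V * D * Vᴴ = 0) : D = 0 := by
  have e : Vᴴ * (V * D * Vᴴ) * V = (Vᴴ * V) * (D * (Vᴴ * V)) := by
    rw [Matrix.mul_assoc V D Vᴴ, ← Matrix.mul_assoc Vᴴ V (D * Vᴴ),
      Matrix.mul_assoc (Vᴴ * V) (D * Vᴴ) V, Matrix.mul_assoc D Vᴴ V]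
  have e2 : Vᴴ * (V * D * Vᴴ) * V = D := by rw [e, h2, Matrix.one_mul, Matrix.mul_one]
  rw [← e2, h, Matrix.mul_zero, Matrix.zero_mul]

end PTMAux

open PTMAux Polynomial

/-- The unital part of the Pauli transfer matrix strictly contracts the generalized Bloch
vector: `‖A θ‖ < ‖θ‖` for every nonzero `θ`, where `A_{ij} = (1/2^n) tr[Pᵢ E(Pⱼ)]` and
`{Pᵢ}` are the nontrivial `n`-qubit Pauli strings (traceless, Hermitian, orthogonal with
`tr[Pᵢ Pⱼ] = 2^n δ_{ij}`). -/
theorem pauli_transfer_matrix_contraction (n : ℕ) (hn : 0 < n)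
    (P : Fin (4 ^ n - 1) → Matrix (Fin (2 ^ n)) (Fin (2 ^ n)) ℂ)
    (hHerm : ∀ i, (P i).IsHermitian)
    (hTr0 : ∀ i, (P i).trace = 0)
    (hOrth : ∀ i j, (P i * P j).trace = if i = j then ((2 : ℂ) ^ n) else 0)
    (E : Matrix (Fin (2 ^ n)) (Fin (2 ^ n)) ℂ →ₗ[ℂ] Matrix (Fin (2 ^ n)) (Fin (2 ^ n)) ℂ)
    (hTP : ∀ A, (E A).trace = A.trace)
    (hUnital : E 1 = 1)
    (hCP : IsCompletelyPositive E)
    (hPD : ∀ σ, IsDensityMatrix σ → (E σ).PosDef)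
    (A : Matrix (Fin (4 ^ n - 1)) (Fin (4 ^ n - 1)) ℝ)
    (hA : A = Matrix.of fun i j => (((2 : ℂ) ^ n)⁻¹ * (P i * E (P j)).trace).re)
    (θ : Fin (4 ^ n - 1) → ℝ) (hθ : θ ≠ 0) :
    ∑ i, (A.mulVec θ i) ^ 2 < ∑ i, (θ i) ^ 2 := by
  classical
  by_contra hcon
  push_neg at hcon
  -- notation
  set dC : ℂ := (2 : ℂ) ^ n with hdC
  have hdC0 : dC ≠ 0 := by positivity
  have hdCreal : dC = (((2 : ℝ) ^ n : ℝ) : ℂ) := by push_cast; rfl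
  set Θ : Matrix (Fin (2 ^ n)) (Fin (2 ^ n)) ℂ := ∑ i, (θ i : ℂ) • P i with hΘ
  have hΘH : Θ.IsHermitian := by
    show Θᴴ = Θ
    rw [hΘ, Matrix.conjTranspose_sum]
    refine Finset.sum_congr rfl fun i _ => ?_
    rw [Matrix.conjTranspose_smul, (hHerm i).eq, Complex.star_def, Complex.conj_ofReal]
  have htrΘ : Θ.trace = 0 := by
    rw [hΘ, Matrix.trace_sum]
    simp [Matrix.trace_smul, hTr0]
  have htrPΘ : ∀ j, (P j * Θ).trace = dC * (θ j : ℂ) := by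
    intro j
    rw [hΘ, Finset.mul_sum, Matrix.trace_sum]
    simp_rw [Matrix.mul_smul, Matrix.trace_smul, hOrth, smul_eq_mul]
    simp_rw [mul_ite, mul_zero]
    rw [Finset.sum_ite_eq]
    simp [mul_comm]
  have htrΘΘ : (Θ * Θ).trace = dC * ((∑ i, θ i ^ 2 : ℝ) : ℂ) := by
    have : Θ * Θ = ∑ i, (θ i : ℂ) • (P i * Θ) := by
      rw [hΘ, Finset.sum_mul]
      exact Finset.sum_congr rfl fun i _ => Matrix.smul_mul _ _ _
    rw [this, Matrix.trace_sum]
    simp_rw [Matrix.trace_smul, htrPΘ, smul_eq_mul]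
    push_cast
    rw [Finset.mul_sum]
    exact Finset.sum_congr rfl fun i _ => by ring
  have hΘne : Θ ≠ 0 := by
    obtain ⟨j, hj⟩ := Function.ne_iff.mp hθ
    intro h0
    have := htrPΘ j
    rw [h0, Matrix.mul_zero, Matrix.trace_zero] at this
    have : (θ j : ℂ) = 0 := by
      field_simp at this
      exact (mul_eq_zero.mp this.symm).resolve_left hdC0
    exact hj (by exact_mod_cast this)
  -- the image of Θ
  set X : Matrix (Fin (2 ^ n)) (Fin (2 ^ n)) ℂ := E Θ with hX
  have hXH : X.IsHermitian := E_herm E hCP hΘH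
  have htrX : X.trace = 0 := by rw [hX, hTP, htrΘ]
  -- Bessel coefficients
  set c : Fin (4 ^ n - 1) → ℂ := fun i => dC⁻¹ * (P i * X).trace with hcdef
  have hcreal : ∀ i, c i = ((A.mulVec θ i : ℝ) : ℂ) := by
    intro i
    have hre : (c i).re = A.mulVec θ i := by
      have hexp : c i = ∑ j, (θ j : ℂ) * (dC⁻¹ * (P i * E (P j)).trace) := by
        show dC⁻¹ * (P i * X).trace = _
        have : P i * X = ∑ j, (θ j : ℂ) • (P i * E (P j)) := by
          rw [hX, hΘ, map_sum]
          rw [Finset.mul_sum]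
          exact Finset.sum_congr rfl fun j _ => by rw [_root_.map_smul, Matrix.mul_smul]
        rw [this, Matrix.trace_sum, Finset.mul_sum]
        simp_rw [Matrix.trace_smul, smul_eq_mul]
        exact Finset.sum_congr rfl fun j _ => by ring
      rw [hexp, Complex.re_sum]
      rw [Matrix.mulVec, hA]
      refine Finset.sum_congr rfl fun j _ => ?_
      rw [Complex.re_ofReal_mul]
      show _ = (dC⁻¹ * (P i * E (P j)).trace).re * θ j
      ring
    have him : (c i).im = 0 := by
      have hconj : star ((P i * X).trace) = (P i * X).trace := by
        rw [← Matrix.trace_conjTranspose, Matrix.conjTranspose_mul, (hHerm i).eq, hXH.eq,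
          Matrix.trace_mul_comm]
      have hconjc : star (c i) = c i := by
        rw [hcdef]
        simp only [star_mul']
        rw [hconj]
        congr 1
        rw [hdCreal, ← Complex.ofReal_inv, Complex.star_def, Complex.conj_ofReal]
      have := congrArg Complex.im hconjc
      simp only [Complex.star_def, Complex.conj_im] at this
      linarith
    rw [← hre, Complex.ext_iff]
    constructor
    · simp
    · simp [him]
  -- Bessel inequality data
  set S : Matrix (Fin (2 ^ n)) (Fin (2 ^ n)) ℂ := ∑ i, c i • P i with hSdef
  have hSH : S.IsHermitian := by
    show Sᴴ = S
    rw [hSdef, Matrix.conjTranspose_sum]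
    refine Finset.sum_congr rfl fun i _ => ?_
    rw [Matrix.conjTranspose_smul, (hHerm i).eq, hcreal i, Complex.star_def, Complex.conj_ofReal]
  have htrPS : ∀ i, (P i * S).trace = dC * c i := by
    intro i
    rw [hSdef, Finset.mul_sum, Matrix.trace_sum]
    simp_rw [Matrix.mul_smul, Matrix.trace_smul, hOrth, smul_eq_mul]
    simp_rw [mul_ite, mul_zero]
    rw [Finset.sum_ite_eq]
    simp [mul_comm]
  have htrXP : ∀ i, (X * P i).trace = dC * c i := by
    intro i
    rw [Matrix.trace_mul_comm]
    show _ = dC * (dC⁻¹ * (P i * X).trace)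
    field_simp
  have htrXS : (X * S).trace = dC * ∑ i, c i ^ 2 := by
    rw [hSdef, Finset.mul_sum, Matrix.trace_sum, Finset.mul_sum]
    refine Finset.sum_congr rfl fun i _ => ?_
    rw [Matrix.mul_smul, Matrix.trace_smul, smul_eq_mul, htrXP]
    ring
  have htrSX : (S * X).trace = dC * ∑ i, c i ^ 2 := by rw [Matrix.trace_mul_comm, htrXS]
  have htrSS : (S * S).trace = dC * ∑ i, c i ^ 2 := by
    rw [hSdef, Finset.sum_mul, Matrix.trace_sum, Finset.mul_sum]
    refine Finset.sum_congr rfl fun i _ => ?_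
    rw [Matrix.smul_mul, Matrix.trace_smul, smul_eq_mul, htrPS]
    ring
  set R : Matrix (Fin (2 ^ n)) (Fin (2 ^ n)) ℂ := X - S with hRdef
  have hRH : R.IsHermitian := hXH.sub hSH
  have htrRR : (Rᴴ * R).trace = (X * X).trace - dC * ∑ i, c i ^ 2 := by
    rw [hRH.eq, hRdef, Matrix.sub_mul, Matrix.mul_sub, Matrix.mul_sub, Matrix.trace_sub,
      Matrix.trace_sub, Matrix.trace_sub, htrXS, htrSX, htrSS]
    ring
  obtain ⟨ρ, hρ0, hρ⟩ : ∃ r : ℝ, 0 ≤ r ∧ (Rᴴ * R).trace = (r : ℂ) :=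
    psd_trace _ (posSemidef_conjTranspose_mul_self R)
  -- the Schwarz defect
  have hΘΘH : (Θ * Θ).IsHermitian := by
    rw [Matrix.IsHermitian, Matrix.conjTranspose_mul, hΘH.eq]
  have hGpsd : (E (Θ * Θ) - E Θ * E Θ).PosSemidef :=
    Gpsd E hUnital hCP hΘH hXH (E_herm E hCP hΘΘH)
  obtain ⟨g, hg0, hgtr⟩ := psd_trace _ hGpsd
  -- the key accounting identity
  have haccount : dC * ((∑ i, θ i ^ 2 : ℝ) : ℂ)
      = (g : ℂ) + (dC * ∑ i, c i ^ 2 + (ρ : ℂ)) := by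
    rw [← htrΘΘ, ← hTP (Θ * Θ)]
    rw [← hgtr, ← hρ, htrRR]
    rw [Matrix.trace_sub, ← hX]
    ring
  have hsumc : (∑ i, c i ^ 2 : ℂ) = ((∑ i, (A.mulVec θ i) ^ 2 : ℝ) : ℂ) := by
    push_cast
    exact Finset.sum_congr rfl fun i _ => by rw [hcreal i]
  have hDpos : (0 : ℝ) < 2 ^ n := by positivity
  have hreal : (2 : ℝ) ^ n * (∑ i, θ i ^ 2) = g + ((2 : ℝ) ^ n * ∑ i, (A.mulVec θ i) ^ 2 + ρ) := by
    have := haccount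
    rw [hsumc, hdCreal] at this
    exact_mod_cast this
  have hg_zero : g = 0 := by nlinarith [hρ0, hg0, hcon, hDpos,
    mul_le_mul_of_nonneg_left hcon (le_of_lt hDpos)]
  -- multiplicativity
  have hGzero : E (Θ * Θ) = E Θ * E Θ := by
    have := psd_trace_zero _ hGpsd (by rw [hgtr, hg_zero]; simp)
    exact sub_eq_zero.mp this
  have hEpow : ∀ k : ℕ, E (Θ ^ k) = X ^ k := by
    intro k
    induction k with
    | zero => simpa using hUnital
    | succ k ih =>
      have hcomm : Θ * Θ ^ k = Θ ^ k * Θ := by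
        rw [← pow_succ', ← pow_succ]
      have hEΘkH : (E (Θ ^ k)).IsHermitian := by rw [ih]; exact hXH.pow k
      have hEABH : (E (Θ * Θ ^ k)).IsHermitian := by
        rw [← pow_succ']
        exact E_herm E hCP (hΘH.pow (k + 1))
      have := mult E hUnital hCP hΘH (hΘH.pow k) hXH hEΘkH hEABH hcomm hGzero
      rw [pow_succ', this, ih, ← pow_succ']
  -- spectral decompositions
  set μ : Fin (2 ^ n) → ℝ := hΘH.eigenvalues with hμdef
  set U : Matrix (Fin (2 ^ n)) (Fin (2 ^ n)) ℂ := (hΘH.eigenvectorUnitary : Matrix (Fin (2 ^ n)) (Fin (2 ^ n)) ℂ) with hUdef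
  have hU1 : U * Uᴴ = 1 := by
    rw [← star_eq_conjTranspose]
    exact (Matrix.mem_unitaryGroup_iff).mp hΘH.eigenvectorUnitary.2
  have hU2 : Uᴴ * U = 1 := by
    rw [← star_eq_conjTranspose]
    exact (Matrix.mem_unitaryGroup_iff').mp hΘH.eigenvectorUnitary.2
  have hspecΘ : Θ = U * Matrix.diagonal (fun i => ((μ i : ℝ) : ℂ)) * Uᴴ := by
    have h := hΘH.spectral_theorem
    rw [← star_eq_conjTranspose] at *
    exact h
  set ν : Fin (2 ^ n) → ℝ := hXH.eigenvalues with hνdef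
  set V : Matrix (Fin (2 ^ n)) (Fin (2 ^ n)) ℂ := (hXH.eigenvectorUnitary : Matrix (Fin (2 ^ n)) (Fin (2 ^ n)) ℂ) with hVdef
  have hV1 : V * Vᴴ = 1 := by
    rw [← star_eq_conjTranspose]
    exact (Matrix.mem_unitaryGroup_iff).mp hXH.eigenvectorUnitary.2
  have hV2 : Vᴴ * V = 1 := by
    rw [← star_eq_conjTranspose]
    exact (Matrix.mem_unitaryGroup_iff').mp hXH.eigenvectorUnitary.2
  have hspecX : X = V * Matrix.diagonal (fun j => ((ν j : ℝ) : ℂ)) * Vᴴ := by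
    have h := hXH.spectral_theorem
    rw [← star_eq_conjTranspose] at *
    exact h
  have hsumμ : ∑ i, μ i = 0 := by
    have h1 : Θ.trace = ∑ i, ((μ i : ℝ) : ℂ) := by rw [hspecΘ, trace_conj U hU2]
    rw [htrΘ, ← Complex.ofReal_sum] at h1
    exact_mod_cast h1.symm
  -- minimum eigenvalue
  have hne : (Finset.univ : Finset (Fin (2 ^ n))).Nonempty :=
    ⟨⟨0, by positivity⟩, Finset.mem_univ _⟩
  obtain ⟨i₀, -, hi₀⟩ := Finset.exists_min_image Finset.univ μ hne
  set lam : ℝ := μ i₀ with hlam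
  set Sset : Finset ℝ := Finset.image μ Finset.univ with hSset
  set T : Finset ℝ := Sset.erase lam with hTdef
  set q : Polynomial ℂ := ∏ t ∈ T, (Polynomial.X - Polynomial.C ((t : ℝ) : ℂ)) ^ 2 with hqdef
  set rp : Polynomial ℂ := ∏ t ∈ Sset, (Polynomial.X - Polynomial.C ((t : ℝ) : ℂ)) with hrpdef
  have haev_q : ∀ x : ℝ, aeval ((x : ℝ) : ℂ) q = (((∏ t ∈ T, (x - t)) ^ 2 : ℝ) : ℂ) := by
    intro x
    rw [hqdef, map_prod]
    push_cast
    rw [← Finset.prod_pow]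
    refine Finset.prod_congr rfl fun t _ => ?_
    rw [map_pow, map_sub, aeval_X, aeval_C]
    norm_num
  have haev_rp : ∀ x : ℝ, aeval ((x : ℝ) : ℂ) rp = ∏ t ∈ Sset, ((x : ℂ) - (t : ℂ)) := by
    intro x
    rw [hrpdef, map_prod]
    refine Finset.prod_congr rfl fun t _ => ?_
    rw [map_sub, aeval_X, aeval_C]
    norm_num
  set qv : Fin (2 ^ n) → ℝ := fun i => (∏ t ∈ T, (μ i - t)) ^ 2 with hqvdef
  set trq : ℝ := ∑ i, qv i with htrqdef
  have hqv0 : ∀ i, 0 ≤ qv i := fun i => sq_nonneg _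
  have htrq : 0 < trq := by
    refine Finset.sum_pos' (fun i _ => hqv0 i) ⟨i₀, Finset.mem_univ _, ?_⟩
    have hprod : (∏ t ∈ T, (μ i₀ - t)) ≠ 0 := by
      refine Finset.prod_ne_zero_iff.mpr fun t ht => sub_ne_zero.mpr ?_
      exact fun h => (Finset.ne_of_mem_erase ht) (by rw [← h, hlam])
    exact lt_of_le_of_ne (sq_nonneg _) (Ne.symm (pow_ne_zero 2 hprod))
  set p : Polynomial ℂ := Polynomial.C (((trq : ℝ) : ℂ))⁻¹ * q with hpdef
  have haev_p : ∀ x : ℝ, aeval ((x : ℝ) : ℂ) p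
      = ((trq : ℝ) : ℂ)⁻¹ * (((∏ t ∈ T, (x - t)) ^ 2 : ℝ) : ℂ) := by
    intro x
    rw [hpdef, _root_.map_mul, aeval_C, haev_q]
    norm_num
  set σ : Matrix (Fin (2 ^ n)) (Fin (2 ^ n)) ℂ := aeval Θ p with hσdef
  have hσdiag : σ = U * Matrix.diagonal (fun i => ((qv i / trq : ℝ) : ℂ)) * Uᴴ := by
    rw [hσdef, hspecΘ, aeval_conj U hU1 hU2]
    have hfn : (fun i => aeval (((μ i : ℝ)) : ℂ) p) = fun i => ((qv i / trq : ℝ) : ℂ) := by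
      funext i
      have hqvi : qv i = (∏ t ∈ T, (μ i - t)) ^ 2 := rfl
      rw [haev_p (μ i), ← hqvi, Complex.ofReal_div]
      ring
    rw [hfn]
  have hσPSD : σ.PosSemidef := by
    rw [hσdiag]
    refine Matrix.PosSemidef.mul_mul_conjTranspose_same ?_ U
    refine Matrix.posSemidef_diagonal_iff.mpr fun i => ?_
    rw [Complex.zero_le_real]
    exact div_nonneg (hqv0 i) htrq.le
  have hσtr : σ.trace = 1 := by
    rw [hσdiag, trace_conj U hU2, ← Complex.ofReal_sum, ← Finset.sum_div, ← htrqdef,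
      div_self htrq.ne']
    norm_num
  have hEσ : E σ = V * Matrix.diagonal (fun j => aeval ((ν j : ℂ)) p) * Vᴴ := by
    rw [hσdef, E_poly E hUnital hEpow p, ← hX, hspecX, aeval_conj V hV1 hV2]
  -- every eigenvalue of X is an eigenvalue of Θ
  have hrΘ : aeval Θ rp = 0 := by
    rw [hspecΘ, aeval_conj U hU1 hU2]
    have : (fun i => aeval ((μ i : ℝ) : ℂ) rp) = fun _ => (0 : ℂ) := by
      funext i
      rw [haev_rp (μ i)]
      exact Finset.prod_eq_zero (Finset.mem_image_of_mem μ (Finset.mem_univ i)) (sub_self _)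
    rw [this, Matrix.diagonal_zero, Matrix.mul_zero, Matrix.zero_mul]
  have hrX0 : V * Matrix.diagonal (fun j => aeval ((ν j : ℂ)) rp) * Vᴴ = 0 := by
    rw [← aeval_conj V hV1 hV2, ← hspecX, ← E_poly E hUnital hEpow rp, hrΘ, map_zero]
  have hdiag0 : ∀ j, aeval ((ν j : ℂ)) rp = 0 := by
    have h := conj_eq_zero V hV2 _ hrX0
    intro j
    have := congrFun (congrFun h j) j
    rwa [Matrix.diagonal_apply_eq] at this
  have hνS : ∀ j, ν j ∈ Sset := by
    intro j
    have h0 := hdiag0 j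
    rw [haev_rp (ν j)] at h0
    obtain ⟨t, ht, hzero⟩ := Finset.prod_eq_zero_iff.mp h0
    have : ν j = t := by exact_mod_cast sub_eq_zero.mp hzero
    rwa [this]
  -- some eigenvalue of X differs from lam
  have hj₀ : ∃ j₀, ν j₀ ≠ lam := by
    by_contra hall
    push_neg at hall
    have h1 : X.trace = ∑ j, ((ν j : ℝ) : ℂ) := by rw [hspecX, trace_conj V hV2]
    rw [htrX] at h1
    have h2 : (0 : ℂ) = ((2 ^ n : ℕ) : ℂ) * ((lam : ℝ) : ℂ) := by
      rw [h1]
      simp [hall, Finset.sum_const, Finset.card_univ]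
    have hlam0 : lam = 0 := by
      have h3 : ((2 ^ n : ℕ) : ℂ) ≠ 0 := by positivity
      have := (mul_eq_zero.mp h2.symm).resolve_left h3
      exact_mod_cast this
    have hμ0 : ∀ i ∈ Finset.univ, μ i = 0 := by
      refine (Finset.sum_eq_zero_iff_of_nonneg fun i _ => ?_).mp hsumμ
      have := hi₀ i (Finset.mem_univ i)
      rw [hlam0] at this
      linarith
    apply hΘne
    rw [hspecΘ]
    have : (fun i => ((μ i : ℝ) : ℂ)) = fun _ => (0 : ℂ) := by
      funext i
      rw [hμ0 i (Finset.mem_univ i)]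
      norm_num
    rw [this, Matrix.diagonal_zero, Matrix.mul_zero, Matrix.zero_mul]
  obtain ⟨j₀, hj₀⟩ := hj₀
  have hpν : aeval ((ν j₀ : ℂ)) p = 0 := by
    rw [haev_p (ν j₀)]
    have : ∏ t ∈ T, (ν j₀ - t) = 0 :=
      Finset.prod_eq_zero (Finset.mem_erase.mpr ⟨hj₀, hνS j₀⟩) (sub_self _)
    rw [this]
    norm_num
  -- contradiction with positive definiteness
  have hEσPD := hPD σ ⟨hσPSD, hσtr⟩
  set w : Fin (2 ^ n) → ℂ := fun a => V a j₀ with hwdef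
  have hw : w ≠ 0 := by
    intro h0
    have h1 : (Vᴴ * V) j₀ j₀ = 1 := by rw [hV2]; exact Matrix.one_apply_eq j₀
    rw [Matrix.mul_apply] at h1
    have hz : ∀ a, V a j₀ = 0 := fun a => congrFun h0 a
    simp only [Matrix.conjTranspose_apply, hz, star_zero, mul_zero, Finset.sum_const_zero] at h1
    exact zero_ne_one h1
  have hEw : E σ *ᵥ w = 0 := by
    rw [hEσ]
    have hwV : w = V *ᵥ Pi.single j₀ 1 := by
      funext i
      simp [Matrix.mulVec_single, hwdef]
    rw [hwV, Matrix.mulVec_mulVec]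
    have hassoc : V * Matrix.diagonal (fun j => aeval ((ν j : ℂ)) p) * Vᴴ * V
        = V * Matrix.diagonal (fun j => aeval ((ν j : ℂ)) p) := by
      rw [Matrix.mul_assoc (V * Matrix.diagonal _) Vᴴ V, hV2, Matrix.mul_one]
    rw [hassoc, Matrix.mulVec_single_one]
    funext i
    rw [Matrix.col_apply, Matrix.mul_diagonal, hpν]
    simp
  have hfinal := hEσPD.dotProduct_mulVec_pos hw
  rw [hEw, dotProduct_zero] at hfinal
  exact lt_irrefl 0 hfinal
end

section
/- Let E_1, ..., E_L be unital, trace-preserving completely positive maps on 2^n × 2^n matrices such that for each l and every density matrix ρ, E_l(ρ) − (β/2^n) I is positive semidefinite, where 0 < β < 1. Then for every density matrix ρ, the composition satisfies E_L ∘ ⋯ ∘ E_1(ρ) = (1 − (1−β)^L) I/2^n + (1−β)^L ρ' for some density matrix ρ'; in particular E_L ∘ ⋯ ∘ E_1(ρ) − ((1−(1−β)^L)/2^n) I is positive semidefinite. -/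
open Matrix ComplexOrder

/-- The composition `E_L ∘ ⋯ ∘ E_1` of a finite family of linear maps. -/
noncomputable def compChain {d : ℕ} :
    (L : ℕ) → (Fin L → (Matrix (Fin d) (Fin d) ℂ →ₗ[ℂ] Matrix (Fin d) (Fin d) ℂ)) →
    (Matrix (Fin d) (Fin d) ℂ →ₗ[ℂ] Matrix (Fin d) (Fin d) ℂ)
  | 0, _ => LinearMap.id
  | (L + 1), E => (E (Fin.last L)) ∘ₗ compChain L (fun l => E l.castSucc)

lemma psd_smul' {d : ℕ} {M : Matrix (Fin d) (Fin d) ℂ} (h : M.PosSemidef) {c : ℝ} (hc : 0 ≤ c) :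
    ((c:ℂ) • M).PosSemidef := by
  constructor
  · unfold Matrix.IsHermitian
    rw [conjTranspose_smul, h.1, Complex.star_def, Complex.conj_ofReal]
  · intro x
    exact (h.smul (a := (c:ℂ)) (by exact_mod_cast hc)).2 x

lemma main_aux (n : ℕ) (β : ℝ) (hβ : 0 < β) (hβ1 : β < 1) :
    ∀ (L : ℕ) (E : Fin L → (Matrix (Fin (2 ^ n)) (Fin (2 ^ n)) ℂ →ₗ[ℂ]
      Matrix (Fin (2 ^ n)) (Fin (2 ^ n)) ℂ)),
    (∀ l, E l 1 = 1) →
    (∀ l A, (E l A).trace = A.trace) →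
    (∀ l ρ, IsDensityMatrix ρ →
      (E l ρ - ((β / 2 ^ n : ℝ) : ℂ) • (1 : Matrix (Fin (2 ^ n)) (Fin (2 ^ n)) ℂ)).PosSemidef) →
    ∀ ρ : Matrix (Fin (2 ^ n)) (Fin (2 ^ n)) ℂ, IsDensityMatrix ρ →
    ∃ ρ' : Matrix (Fin (2 ^ n)) (Fin (2 ^ n)) ℂ, IsDensityMatrix ρ' ∧
      compChain L E ρ = (((1 - (1 - β) ^ L) / 2 ^ n : ℝ) : ℂ) •
          (1 : Matrix (Fin (2 ^ n)) (Fin (2 ^ n)) ℂ)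
        + (((1 - β) ^ L : ℝ) : ℂ) • ρ' := by
  intro L
  induction L with
  | zero =>
    intro E _ _ _ ρ hρ
    exact ⟨ρ, hρ, by simp [compChain]⟩
  | succ L ih =>
    intro E hU hT hF ρ hρ
    obtain ⟨ρ', hρ', heq⟩ := ih (fun l => E l.castSucc) (fun l => hU _) (fun l => hT _)
      (fun l => hF _) ρ hρ
    have h1β : (0:ℝ) < 1 - β := by linarith
    set D := E (Fin.last L) ρ' - ((β / 2 ^ n : ℝ) : ℂ) •
      (1 : Matrix (Fin (2 ^ n)) (Fin (2 ^ n)) ℂ) with hD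
    have hDpsd : D.PosSemidef := hF (Fin.last L) ρ' hρ'
    refine ⟨(((1 - β)⁻¹ : ℝ) : ℂ) • D, ⟨psd_smul' hDpsd (by positivity), ?_⟩, ?_⟩
    · rw [trace_smul, hD, trace_sub, trace_smul, hT, hρ'.2, trace_one]
      simp only [smul_eq_mul, Fintype.card_fin, Nat.cast_pow, Nat.cast_ofNat]
      have h2 : ((2:ℂ) ^ n) ≠ 0 := by positivity
      have h1 : (1:ℂ) - (β:ℂ) ≠ 0 := by exact_mod_cast h1β.ne'
      push_cast
      field_simp
    · show E (Fin.last L) (compChain L (fun l => E l.castSucc) ρ) = _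
      rw [heq, map_add, LinearMap.map_smul, LinearMap.map_smul, hU]
      have hED : E (Fin.last L) ρ' = D + ((β / 2 ^ n : ℝ) : ℂ) • 1 := by
        rw [hD, sub_add_cancel]
      rw [hED, smul_add, smul_smul, smul_smul]
      have hc1 : (((1 - (1 - β) ^ (L+1)) / 2 ^ n : ℝ) : ℂ)
          = (((1 - (1 - β) ^ L) / 2 ^ n : ℝ) : ℂ)
            + (((1 - β) ^ L : ℝ) : ℂ) * ((β / 2 ^ n : ℝ) : ℂ) := by
        push_cast
        have h2 : ((2:ℂ) ^ n) ≠ 0 := by positivity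
        field_simp
        ring
      have hc2 : (((1 - β) ^ (L+1) : ℝ) : ℂ) * (((1 - β)⁻¹ : ℝ) : ℂ)
          = (((1 - β) ^ L : ℝ) : ℂ) := by
        have h1 : (1:ℂ) - (β:ℂ) ≠ 0 := by exact_mod_cast h1β.ne'
        push_cast
        rw [pow_succ]
        field_simp
      rw [hc1, hc2, add_smul]
      abel

/-- If each unital trace-preserving completely positive `E_l` satisfies
`E_l(ρ) − (β/2^n) I ≥ 0` on density matrices, then the composition satisfies
`E_L ∘ ⋯ ∘ E_1(ρ) = (1 − (1−β)^L) I/2^n + (1−β)^L ρ'` for some density matrix `ρ'`;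
in particular `E_L ∘ ⋯ ∘ E_1(ρ) − ((1−(1−β)^L)/2^n) I` is positive semidefinite. -/
theorem composed_noise_depolarizing_floor (n L : ℕ) (β : ℝ)
    (hβ : 0 < β) (hβ1 : β < 1)
    (E : Fin L → (Matrix (Fin (2 ^ n)) (Fin (2 ^ n)) ℂ →ₗ[ℂ]
      Matrix (Fin (2 ^ n)) (Fin (2 ^ n)) ℂ))
    (hUnital : ∀ l, E l 1 = 1)
    (hTP : ∀ l A, (E l A).trace = A.trace)
    (hCP : ∀ l, IsCompletelyPositive (E l))
    (hFloor : ∀ l ρ, IsDensityMatrix ρ →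
      (E l ρ - ((β / 2 ^ n : ℝ) : ℂ) • (1 : Matrix (Fin (2 ^ n)) (Fin (2 ^ n)) ℂ)).PosSemidef)
    (ρ : Matrix (Fin (2 ^ n)) (Fin (2 ^ n)) ℂ) (hρ : IsDensityMatrix ρ) :
    (∃ ρ' : Matrix (Fin (2 ^ n)) (Fin (2 ^ n)) ℂ, IsDensityMatrix ρ' ∧
      compChain L E ρ = (((1 - (1 - β) ^ L) / 2 ^ n : ℝ) : ℂ) •
          (1 : Matrix (Fin (2 ^ n)) (Fin (2 ^ n)) ℂ)
        + (((1 - β) ^ L : ℝ) : ℂ) • ρ') ∧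
    (compChain L E ρ - (((1 - (1 - β) ^ L) / 2 ^ n : ℝ) : ℂ) •
        (1 : Matrix (Fin (2 ^ n)) (Fin (2 ^ n)) ℂ)).PosSemidef := by
  obtain ⟨ρ', hρ', heq⟩ := main_aux n β hβ hβ1 L E hUnital hTP hFloor ρ hρ
  refine ⟨⟨ρ', hρ', heq⟩, ?_⟩
  have : compChain L E ρ - (((1 - (1 - β) ^ L) / 2 ^ n : ℝ) : ℂ) •
      (1 : Matrix (Fin (2 ^ n)) (Fin (2 ^ n)) ℂ) = (((1 - β) ^ L : ℝ) : ℂ) • ρ' := by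
    rw [heq]; abel
  rw [this]
  exact psd_smul' hρ'.1 (pow_nonneg (by linarith) L)
end

section
/- Let E_p be the single-qubit dephasing channel E_p(ρ) = (1 − p/2)ρ + (p/2) ZρZ with 0 < p < 1. Then its inverse is E_p^{−1}(ρ) = ((2−p)/(2−2p))ρ − (p/(2−2p)) ZρZ, and ν(E_p^{−1}) := ((2−p)/(2−2p))² + (p/(2−2p))² = 1 + p + O(p²); more precisely ν(E_p^{−1}) ≥ 1 + p for 0 < p < 1. -/
open Matrix

noncomputable section

/-- The Pauli Z matrix. -/
def pauliZ : Matrix (Fin 2) (Fin 2) ℂ := !![1, 0; 0, -1]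

/-- The single-qubit dephasing channel `E_p(ρ) = (1 − p/2)ρ + (p/2) ZρZ`. -/
def dephasing (p : ℝ) (ρ : Matrix (Fin 2) (Fin 2) ℂ) : Matrix (Fin 2) (Fin 2) ℂ :=
  ((1 - p / 2 : ℝ) : ℂ) • ρ + ((p / 2 : ℝ) : ℂ) • (pauliZ * ρ * pauliZ)

/-- The candidate inverse of the dephasing channel:
`E_p⁻¹(ρ) = ((2−p)/(2−2p))ρ − (p/(2−2p)) ZρZ`. -/
def dephasingInv (p : ℝ) (ρ : Matrix (Fin 2) (Fin 2) ℂ) : Matrix (Fin 2) (Fin 2) ℂ :=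
  (((2 - p) / (2 - 2 * p) : ℝ) : ℂ) • ρ -
    ((p / (2 - 2 * p) : ℝ) : ℂ) • (pauliZ * ρ * pauliZ)

lemma pauliZ_sq : pauliZ * pauliZ = 1 := by
  simp [pauliZ]
  norm_num [Matrix.mul_fin_two, ← Matrix.one_fin_two]

lemma ZZ (ρ : Matrix (Fin 2) (Fin 2) ℂ) :
    pauliZ * (pauliZ * ρ * pauliZ) * pauliZ = ρ := by
  calc pauliZ * (pauliZ * ρ * pauliZ) * pauliZ
      = (pauliZ * pauliZ) * ρ * (pauliZ * pauliZ) := by noncomm_ring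
    _ = ρ := by rw [pauliZ_sq]; simp

set_option maxHeartbeats 1000000 in
/-- `dephasingInv p` is the (two-sided) inverse of the single-qubit dephasing channel,
and `ν(E_p⁻¹) = ((2−p)/(2−2p))² + (p/(2−2p))² = 1 + p + O(p²)`; more precisely
`ν(E_p⁻¹) ≥ 1 + p` for `0 < p < 1`. -/
theorem dephasing_inverse_nu (p : ℝ) (hp0 : 0 < p) (hp1 : p < 1) :
    (∀ ρ : Matrix (Fin 2) (Fin 2) ℂ, dephasingInv p (dephasing p ρ) = ρ) ∧
    (∀ ρ : Matrix (Fin 2) (Fin 2) ℂ, dephasing p (dephasingInv p ρ) = ρ) ∧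
    1 + p ≤ ((2 - p) / (2 - 2 * p)) ^ 2 + (p / (2 - 2 * p)) ^ 2 := by
  have hne : (2 - 2 * p) ≠ 0 := by nlinarith
  have hc1 : ((1 - p / 2 : ℝ) : ℂ) * (((2 - p) / (2 - 2 * p) : ℝ) : ℂ)
      - ((p / 2 : ℝ) : ℂ) * ((p / (2 - 2 * p) : ℝ) : ℂ) = 1 := by
    push_cast
    have : ((2 : ℂ) - 2 * p) ≠ 0 := by
      exact_mod_cast (Complex.ofReal_ne_zero.mpr hne)
    have h1 : (1 - (p:ℂ)) ≠ 0 := by intro h; apply this; linear_combination 2 * h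
    field_simp
    ring
  have hc2 : ((p / 2 : ℝ) : ℂ) * (((2 - p) / (2 - 2 * p) : ℝ) : ℂ)
      - ((1 - p / 2 : ℝ) : ℂ) * ((p / (2 - 2 * p) : ℝ) : ℂ) = 0 := by
    push_cast
    have : ((2 : ℂ) - 2 * p) ≠ 0 := by
      exact_mod_cast (Complex.ofReal_ne_zero.mpr hne)
    have h1 : (1 - (p:ℂ)) ≠ 0 := by intro h; apply this; linear_combination 2 * h
    field_simp
    ring
  refine ⟨?_, ?_, ?_⟩
  · intro ρ
    have hC : ((2 : ℂ) - 2 * p) ≠ 0 := by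
      exact_mod_cast (Complex.ofReal_ne_zero.mpr hne)
    have h1 : (1 - (p:ℂ)) ≠ 0 := by intro h; apply hC; linear_combination 2 * h
    simp only [dephasing, dephasingInv, smul_add, smul_smul, Matrix.mul_add,
      Matrix.add_mul, Matrix.mul_smul, Matrix.smul_mul, ZZ]
    match_scalars <;> push_cast <;> field_simp <;> ring
  · intro ρ
    have hC : ((2 : ℂ) - 2 * p) ≠ 0 := by
      exact_mod_cast (Complex.ofReal_ne_zero.mpr hne)
    have h1 : (1 - (p:ℂ)) ≠ 0 := by intro h; apply hC; linear_combination 2 * h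
    simp only [dephasing, dephasingInv, smul_sub, smul_smul, Matrix.mul_sub,
      Matrix.sub_mul, Matrix.mul_smul, Matrix.smul_mul, ZZ]
    match_scalars <;> push_cast <;> field_simp <;> ring
  · rw [div_pow, div_pow, ← add_div, le_div_iff₀ (pow_pos (by linarith : (0:ℝ) < 2 - 2 * p) 2)]
    nlinarith [mul_nonneg (mul_nonneg hp0.le hp0.le) (by linarith : (0:ℝ) ≤ 3 - 2 * p)]
end
end
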